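/- Let Z be a point process on ℝ that is superposable: for all α, β ∈ ℝ with e^α + e^β = 1, Z is equal in law to T_α Z + T_β Z', where Z' is an independent copy of Z and T_x is translation by x. Define the cumulant K(f) = −log E[exp(−∫ f dZ)] for measurable f : ℝ → [0,∞). Then K(f(· + x)) = e^x K(f) for all x ∈ ℝ. -/

import Mathlib

open Real MeasureTheory ENNReal

/-- The Laplace functional `L(f) = E[exp(−⟨Z, f⟩)]` of a random measure `Z`, with the
convention `exp(−∞) = 0` when `⟨Z(ω), f⟩ = ∞`. -/
noncomputable def laplaceFunctional {Ω : Type*} [MeasurableSpace Ω] (P : Measure Ω)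
    (Z : Ω → Measure ℝ) (f : ℝ → ℝ) : ℝ :=
  ∫ ω, (if (∫⁻ y, ENNReal.ofReal (f y) ∂(Z ω)) = ⊤ then 0
        else Real.exp (-(∫⁻ y, ENNReal.ofReal (f y) ∂(Z ω)).toReal)) ∂P

/-- The cumulant `K(f) = −log E[exp(−⟨Z, f⟩)] ∈ [0,∞]` of a random measure `Z`. -/
noncomputable def cumulant {Ω : Type*} [MeasurableSpace Ω] (P : Measure Ω)
    (Z : Ω → Measure ℝ) (f : ℝ → ℝ) : ℝ≥0∞ :=
  if laplaceFunctional P Z f = 0 then ⊤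
  else ENNReal.ofReal (-Real.log (laplaceFunctional P Z f))

namespace CumulantAux

noncomputable def phi (a : ℝ≥0∞) : ℝ := if a = ⊤ then 0 else Real.exp (-a.toReal)

lemma phi_nonneg (a : ℝ≥0∞) : 0 ≤ phi a := by
  unfold phi; split
  · exact le_refl 0
  · positivity

lemma phi_le_one (a : ℝ≥0∞) : phi a ≤ 1 := by
  unfold phi; split
  · norm_num
  · exact Real.exp_le_one_iff.2 (neg_nonpos.2 ENNReal.toReal_nonneg)

lemma phi_add (a b : ℝ≥0∞) : phi (a + b) = phi a * phi b := by
  unfold phi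
  rcases eq_or_ne a ⊤ with ha | ha
  · simp [ha]
  rcases eq_or_ne b ⊤ with hb | hb
  · simp [hb]
  · rw [if_neg (by simp [ENNReal.add_eq_top, ha, hb]), if_neg ha, if_neg hb,
      ENNReal.toReal_add ha hb, neg_add, Real.exp_add]

lemma measurable_phi : Measurable phi := by
  unfold phi
  exact Measurable.ite measurableSet_eq measurable_const
    (Real.measurable_exp.comp ENNReal.measurable_toReal.neg)

lemma meas_LF {f : ℝ → ℝ} (hf : Measurable f) :
    Measurable fun μ : Measure ℝ => phi (∫⁻ y, ENNReal.ofReal (f y) ∂μ) :=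
  measurable_phi.comp (Measure.measurable_lintegral (hf.ennreal_ofReal))

lemma lap_eq {Ω : Type*} [MeasurableSpace Ω] (P : Measure Ω) (Z : Ω → Measure ℝ) (f : ℝ → ℝ) :
    laplaceFunctional P Z f = ∫ ω, phi (∫⁻ y, ENNReal.ofReal (f y) ∂(Z ω)) ∂P := rfl

lemma lap_map {Ω : Type*} [MeasurableSpace Ω] (P : Measure Ω) (Z : Ω → Measure ℝ)
    (hZ : Measurable Z) {f : ℝ → ℝ} (hf : Measurable f) :
    laplaceFunctional P Z f = ∫ μ, phi (∫⁻ y, ENNReal.ofReal (f y) ∂μ) ∂(Measure.map Z P) := by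
  rw [lap_eq, integral_map hZ.aemeasurable (meas_LF hf).aestronglyMeasurable]

lemma lap_nonneg {Ω : Type*} [MeasurableSpace Ω] (P : Measure Ω) (Z : Ω → Measure ℝ)
    (f : ℝ → ℝ) : 0 ≤ laplaceFunctional P Z f := by
  rw [lap_eq]; exact integral_nonneg fun ω => phi_nonneg _

lemma integrable_LF {Ω : Type*} [MeasurableSpace Ω] (P : Measure Ω) [IsProbabilityMeasure P]
    (Z : Ω → Measure ℝ) (hZ : Measurable Z) {f : ℝ → ℝ} (hf : Measurable f) :
    Integrable (fun ω => phi (∫⁻ y, ENNReal.ofReal (f y) ∂(Z ω))) P :=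
  (integrable_const 1).mono' ((meas_LF hf).comp hZ).aestronglyMeasurable
    (ae_of_all _ fun ω => by
      rw [Real.norm_eq_abs, abs_of_nonneg (phi_nonneg _)]; exact phi_le_one _)

lemma lap_le_one {Ω : Type*} [MeasurableSpace Ω] (P : Measure Ω) [IsProbabilityMeasure P]
    (Z : Ω → Measure ℝ) (hZ : Measurable Z) {f : ℝ → ℝ} (hf : Measurable f) :
    laplaceFunctional P Z f ≤ 1 := by
  rw [lap_eq]
  calc ∫ ω, phi (∫⁻ y, ENNReal.ofReal (f y) ∂(Z ω)) ∂P
      ≤ ∫ _ω, (1 : ℝ) ∂P :=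
        integral_mono (integrable_LF P Z hZ hf) (integrable_const 1) fun ω => phi_le_one _
    _ = 1 := by simp

lemma lap_mul {Ω : Type*} [MeasurableSpace Ω] (P : Measure Ω) [IsProbabilityMeasure P]
    (Z Z' : Ω → Measure ℝ) (hZ : Measurable Z) (hZ' : Measurable Z')
    (hid : Measure.map Z P = Measure.map Z' P)
    (hindep : ProbabilityTheory.IndepFun Z Z' P)
    (hsup : ∀ α β : ℝ, Real.exp α + Real.exp β = 1 →
      Measure.map (fun ω => Measure.map (fun y => y + α) (Z ω)
        + Measure.map (fun y => y + β) (Z' ω)) P = Measure.map Z P)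
    {f : ℝ → ℝ} (hf : Measurable f) (α β : ℝ) (hαβ : Real.exp α + Real.exp β = 1) :
    laplaceFunctional P Z f
      = laplaceFunctional P Z (fun y => f (y + α)) * laplaceFunctional P Z (fun y => f (y + β)) := by
  have hfα : Measurable (fun y => f (y + α)) := hf.comp (measurable_add_const α)
  have hfβ : Measurable (fun y => f (y + β)) := hf.comp (measurable_add_const β)
  set W : Ω → Measure ℝ := fun ω => Measure.map (fun y => y + α) (Z ω)
      + Measure.map (fun y => y + β) (Z' ω) with hWdef
  have hW : Measurable W := by
    apply Measure.measurable_of_measurable_coe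
    intro s hs
    have hco : (fun ω => W ω s) = fun ω =>
        Z ω ((fun y => y + α) ⁻¹' s) + Z' ω ((fun y => y + β) ⁻¹' s) := by
      funext ω
      simp only [hWdef, Measure.add_apply,
        Measure.map_apply (measurable_add_const α) hs,
        Measure.map_apply (measurable_add_const β) hs]
    rw [hco]
    exact ((Measure.measurable_coe ((measurable_add_const α) hs)).comp hZ).add
      ((Measure.measurable_coe ((measurable_add_const β) hs)).comp hZ')
  have h1 : laplaceFunctional P Z f = ∫ ω, phi (∫⁻ y, ENNReal.ofReal (f y) ∂(W ω)) ∂P := by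
    rw [lap_map P Z hZ hf, ← hsup α β hαβ]
    exact integral_map hW.aemeasurable (meas_LF hf).aestronglyMeasurable
  have h2 : ∀ ω, phi (∫⁻ y, ENNReal.ofReal (f y) ∂(W ω))
      = phi (∫⁻ y, ENNReal.ofReal (f (y + α)) ∂(Z ω))
        * phi (∫⁻ y, ENNReal.ofReal (f (y + β)) ∂(Z' ω)) := by
    intro ω
    simp only [hWdef]
    rw [lintegral_add_measure,
      lintegral_map (hf.ennreal_ofReal) (measurable_add_const α),
      lintegral_map (hf.ennreal_ofReal) (measurable_add_const β),
      phi_add]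
  have h3 : laplaceFunctional P Z f
      = (∫ ω, phi (∫⁻ y, ENNReal.ofReal (f (y + α)) ∂(Z ω)) ∂P)
        * ∫ ω, phi (∫⁻ y, ENNReal.ofReal (f (y + β)) ∂(Z' ω)) ∂P := by
    rw [h1]
    simp only [h2]
    exact ProbabilityTheory.IndepFun.integral_fun_mul_eq_mul_integral (hindep.comp (meas_LF hfα) (meas_LF hfβ))
      ((meas_LF hfα).comp hZ).aestronglyMeasurable
      ((meas_LF hfβ).comp hZ').aestronglyMeasurable
  rw [h3]
  congr 1
  calc (∫ ω, phi (∫⁻ y, ENNReal.ofReal (f (y + β)) ∂(Z' ω)) ∂P)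
      = ∫ μ, phi (∫⁻ y, ENNReal.ofReal (f (y + β)) ∂μ) ∂(Measure.map Z' P) :=
        (integral_map hZ'.aemeasurable (meas_LF hfβ).aestronglyMeasurable).symm
    _ = ∫ μ, phi (∫⁻ y, ENNReal.ofReal (f (y + β)) ∂μ) ∂(Measure.map Z P) := by rw [hid]
    _ = laplaceFunctional P Z (fun y => f (y + β)) := (lap_map P Z hZ hfβ).symm

/-- An additive `[0,∞]`-valued function on the positive reals is linear. -/
lemma additive_scaling (F : ℝ → ℝ≥0∞)
    (hF : ∀ a b : ℝ, 0 < a → 0 < b → F (a + b) = F a + F b) :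
    ∀ t : ℝ, 0 < t → F t = ENNReal.ofReal t * F 1 := by
  have mono : ∀ s t : ℝ, 0 < s → s < t → F s ≤ F t := by
    intro s t hs hst
    have h : F t = F s + F (t - s) := by
      have := hF s (t - s) hs (by linarith)
      rw [show s + (t - s) = t by ring] at this
      exact this
    rw [h]; exact le_self_add
  have nsmul : ∀ (n : ℕ), 0 < n → ∀ t : ℝ, 0 < t → F ((n : ℝ) * t) = (n : ℝ≥0∞) * F t := by
    intro n
    induction n with
    | zero => intro h; exact absurd h (lt_irrefl 0)
    | succ k ih =>
      intro _ t ht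
      rcases Nat.eq_zero_or_pos k with hk | hk
      · subst hk; simp
      · have h1 : ((k + 1 : ℕ) : ℝ) * t = (k : ℝ) * t + t := by push_cast; ring
        rw [h1, hF _ t (by positivity) ht, ih hk t ht]
        push_cast; ring
  have hq : ∀ q : ℚ, 0 < q → F (q : ℝ) = ENNReal.ofReal (q : ℝ) * F 1 := by
    intro q hq0
    set m : ℕ := q.num.toNat with hm
    set n : ℕ := q.den with hn
    have hmpos : 0 < m := by
      have := Rat.num_pos.2 hq0
      omega
    have hnpos : 0 < n := q.pos
    have hqe : (q : ℝ) = (m : ℝ) / (n : ℝ) := by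
      rw [Rat.cast_def, hm, hn]
      congr 1
      exact_mod_cast (Int.toNat_of_nonneg (le_of_lt (Rat.num_pos.2 hq0))).symm
    have hinv : (0 : ℝ) < 1 / (n : ℝ) := by positivity
    have e1 : F (q : ℝ) = (m : ℝ≥0∞) * F (1 / (n : ℝ)) := by
      rw [hqe, show (m : ℝ) / (n : ℝ) = (m : ℝ) * (1 / (n : ℝ)) by ring]
      exact nsmul m hmpos _ hinv
    have e2 : F 1 = (n : ℝ≥0∞) * F (1 / (n : ℝ)) := by
      have h := nsmul n hnpos (1 / (n : ℝ)) hinv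
      rw [mul_one_div, div_self (Nat.cast_pos.2 hnpos).ne'] at h
      exact h
    rw [e1, e2, ← mul_assoc]
    congr 1
    rw [show ((n : ℝ≥0∞)) = ENNReal.ofReal (n : ℝ) by rw [ENNReal.ofReal_natCast],
      ← ENNReal.ofReal_mul (le_of_lt (by exact_mod_cast hq0))]
    rw [hqe]
    rw [show (m : ℝ) / (n : ℝ) * (n : ℝ) = (m : ℝ) by field_simp]
    rw [ENNReal.ofReal_natCast]
  intro t ht
  rcases eq_or_ne (F 1) ⊤ with hc | hc
  · -- infinite case
    obtain ⟨q, hq1, hq2⟩ := exists_rat_btwn ht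
    have hq0 : 0 < q := by exact_mod_cast hq1
    have hFq : F (q : ℝ) = ⊤ := by
      rw [hq q hq0, hc, ENNReal.mul_top]
      exact (ENNReal.ofReal_pos.2 (by exact_mod_cast hq0)).ne'
    have : F t = ⊤ := top_le_iff.1 (hFq ▸ mono (q : ℝ) t (by exact_mod_cast hq0) hq2)
    rw [this, hc, ENNReal.mul_top (ENNReal.ofReal_pos.2 ht).ne']
  · -- finite case
    set c' : ℝ := (F 1).toReal with hc'
    have hc'0 : 0 ≤ c' := ENNReal.toReal_nonneg
    have hFfin : ∀ s : ℚ, 0 < s → F (s : ℝ) ≠ ⊤ := by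
      intro s hs
      rw [hq s hs]
      exact ENNReal.mul_ne_top ENNReal.ofReal_ne_top hc
    obtain ⟨q0, hq0⟩ := exists_rat_gt t
    have hq0pos : 0 < q0 := by
      have : (0:ℝ) < q0 := lt_trans ht hq0
      exact_mod_cast this
    have hFt : F t ≠ ⊤ := by
      intro h
      exact hFfin q0 hq0pos (top_le_iff.1 (h ▸ mono t (q0:ℝ) ht hq0))
    set r : ℝ := (F t).toReal with hr
    have hr0 : 0 ≤ r := ENNReal.toReal_nonneg
    have hqtoReal : ∀ s : ℚ, 0 < s → (F (s:ℝ)).toReal = (s:ℝ) * c' := by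
      intro s hs
      rw [hq s hs, ENNReal.toReal_mul, ENNReal.toReal_ofReal (le_of_lt (by exact_mod_cast hs))]
    have upper : ∀ s : ℝ, t < s → r ≤ s * c' := by
      intro s hs
      obtain ⟨q, hq1, hq2⟩ := exists_rat_btwn hs
      have hqp : 0 < q := by
        have : (0:ℝ) < q := lt_trans ht hq1
        exact_mod_cast this
      have h1 : F t ≤ F (q : ℝ) := mono t (q:ℝ) ht hq1
      have h2 : r ≤ (q:ℝ) * c' := by
        have := ENNReal.toReal_mono (hFfin q hqp) h1
        rwa [hqtoReal q hqp] at this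
      nlinarith
    have lower : ∀ s : ℝ, 0 < s → s < t → s * c' ≤ r := by
      intro s hs hst
      obtain ⟨q, hq1, hq2⟩ := exists_rat_btwn hst
      have hqp : 0 < q := by
        have : (0:ℝ) < q := lt_trans hs hq1
        exact_mod_cast this
      have h1 : F (q:ℝ) ≤ F t := mono (q:ℝ) t (by exact_mod_cast hqp) hq2
      have h2 : (q:ℝ) * c' ≤ r := by
        have := ENNReal.toReal_mono hFt h1
        rwa [hqtoReal q hqp] at this
      nlinarith
    have hreq : r = t * c' := by
      apply le_antisymm
      · by_contra hcon
        push_neg at hcon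
        rcases eq_or_lt_of_le hc'0 with h0 | h0
        · have := upper (t + 1) (by linarith)
          rw [← h0] at this hcon
          simp at this hcon
          linarith
        · have h2 : t < r / c' := (lt_div_iff₀ h0).2 (by linarith)
          have h4 := upper ((t + r / c') / 2) (by linarith)
          have h5 : (t + r / c') / 2 * c' < r := by
            have h6 : (t + r / c') / 2 < r / c' := by linarith
            have h7 := mul_lt_mul_of_pos_right h6 h0
            rwa [div_mul_cancel₀ r (ne_of_gt h0)] at h7
          linarith
      · by_contra hcon
        push_neg at hcon
        rcases eq_or_lt_of_le hc'0 with h0 | h0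
        · rw [← h0] at hcon; simp at hcon; linarith
        · have h2 : r / c' < t := (div_lt_iff₀ h0).2 (by linarith)
          have h2' : 0 ≤ r / c' := div_nonneg hr0 (le_of_lt h0)
          have := lower ((r / c' + t) / 2) (by linarith) (by linarith)
          nlinarith [(div_mul_cancel₀ r (ne_of_gt h0))]
    have : F t = ENNReal.ofReal (t * c') := by
      rw [← hreq, hr, ENNReal.ofReal_toReal hFt]
    rw [this, ENNReal.ofReal_mul (le_of_lt ht), hc', ENNReal.ofReal_toReal hc]

end CumulantAux

open CumulantAux in
/-- Let `Z` be a point process on `ℝ` which is superposable: for all `α, β` with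
`e^α + e^β = 1`, `Z` is equal in law to `T_α Z + T_β Z'`, where `Z'` is an independent copy of
`Z` and `T_x` is translation by `x`.  Then the cumulant satisfies
`K(f(· + x)) = e^x K(f)` for all `x ∈ ℝ` and measurable `f ≥ 0`. -/
theorem cumulant_superposable {Ω : Type*} [MeasurableSpace Ω] (P : Measure Ω)
    [IsProbabilityMeasure P] (Z Z' : Ω → Measure ℝ)
    (hZ : Measurable Z) (hZ' : Measurable Z')
    (hid : Measure.map Z P = Measure.map Z' P)
    (hindep : ProbabilityTheory.IndepFun Z Z' P)
    (hsup : ∀ α β : ℝ, Real.exp α + Real.exp β = 1 →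
      Measure.map (fun ω => Measure.map (fun y => y + α) (Z ω)
        + Measure.map (fun y => y + β) (Z' ω)) P = Measure.map Z P) :
    ∀ f : ℝ → ℝ, Measurable f → (∀ y, 0 ≤ f y) → ∀ x : ℝ,
      cumulant P Z (fun y => f (y + x)) = ENNReal.ofReal (Real.exp x) * cumulant P Z f := by
  intro f hf hf0 x
  -- additivity of the cumulant from superposability
  have key : ∀ (g : ℝ → ℝ), Measurable g → ∀ α β : ℝ, Real.exp α + Real.exp β = 1 →
      cumulant P Z (fun y => g (y + α)) + cumulant P Z (fun y => g (y + β))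
        = cumulant P Z g := by
    intro g hg α β hab
    have hgα : Measurable (fun y => g (y + α)) := hg.comp (measurable_add_const α)
    have hgβ : Measurable (fun y => g (y + β)) := hg.comp (measurable_add_const β)
    have hmul := lap_mul P Z Z' hZ hZ' hid hindep hsup hg α β hab
    unfold cumulant
    by_cases e1 : laplaceFunctional P Z (fun y => g (y + α)) = 0
    · have hL : laplaceFunctional P Z g = 0 := by rw [hmul, e1, zero_mul]
      simp [e1, hL]
    by_cases e2 : laplaceFunctional P Z (fun y => g (y + β)) = 0
    · have hL : laplaceFunctional P Z g = 0 := by rw [hmul, e2, mul_zero]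
      simp [e2, hL]
    have hL : laplaceFunctional P Z g ≠ 0 := by
      rw [hmul]; exact mul_ne_zero e1 e2
    rw [if_neg e1, if_neg e2, if_neg hL]
    have p1 : 0 < laplaceFunctional P Z (fun y => g (y + α)) :=
      lt_of_le_of_ne (lap_nonneg P Z _) (Ne.symm e1)
    have p2 : 0 < laplaceFunctional P Z (fun y => g (y + β)) :=
      lt_of_le_of_ne (lap_nonneg P Z _) (Ne.symm e2)
    have u1 : laplaceFunctional P Z (fun y => g (y + α)) ≤ 1 := lap_le_one P Z hZ hgα
    have u2 : laplaceFunctional P Z (fun y => g (y + β)) ≤ 1 := lap_le_one P Z hZ hgβ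
    rw [← ENNReal.ofReal_add (neg_nonneg.2 (Real.log_nonpos (le_of_lt p1) u1))
      (neg_nonneg.2 (Real.log_nonpos (le_of_lt p2) u2))]
    congr 1
    rw [hmul, Real.log_mul (ne_of_gt p1) (ne_of_gt p2)]
    ring
  set G : ℝ → ℝ≥0∞ := fun u => cumulant P Z (fun y => f (y + u)) with hG
  have hGrel : ∀ u α β : ℝ, Real.exp α + Real.exp β = 1 →
      G (u + α) + G (u + β) = G u := by
    intro u α β h
    have e1 : (fun y => f (y + (u + α))) = (fun y => f ((y + α) + u)) := by
      funext y; congr 1; ring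
    have e2 : (fun y => f (y + (u + β))) = (fun y => f ((y + β) + u)) := by
      funext y; congr 1; ring
    simp only [hG]
    rw [e1, e2]
    exact key (fun y => f (y + u)) (hf.comp (measurable_add_const u)) α β h
  have hFadd : ∀ a b : ℝ, 0 < a → 0 < b →
      G (Real.log (a + b)) = G (Real.log a) + G (Real.log b) := by
    intro a b ha hb
    have hab : 0 < a + b := by linarith
    have h1 : Real.exp (Real.log a - Real.log (a + b))
        + Real.exp (Real.log b - Real.log (a + b)) = 1 := by
      rw [Real.exp_sub, Real.exp_sub, Real.exp_log ha, Real.exp_log hb, Real.exp_log hab]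
      field_simp
    have := hGrel (Real.log (a + b)) _ _ h1
    rw [show Real.log (a + b) + (Real.log a - Real.log (a + b)) = Real.log a by ring,
      show Real.log (a + b) + (Real.log b - Real.log (a + b)) = Real.log b by ring] at this
    exact this.symm
  have := additive_scaling (fun t => G (Real.log t))
    (fun a b ha hb => hFadd a b ha hb) (Real.exp x) (Real.exp_pos x)
  simp only [Real.log_exp, Real.log_one] at this
  have hG0 : G 0 = cumulant P Z f := by
    simp only [hG]
    congr 1
    funext y; rw [add_zero]
  rw [hG0] at this
  exact this
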